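/- Let E be an N×n real matrix with ‖E‖ ≤ 2(√N + √n), let b ≥ 2, and let z ∈ ℂ with |z| ≥ 2b(√N + √n). Then zI − ℰ is invertible, ‖G(z)‖ ≤ (b/(b−1))·(1/|z|), and (1 − 1/(4b(b−1)))·|z| ≤ |φ_i(z)| ≤ (1 + 1/(4b(b−1)))·|z| for i = 1, 2. -/

import Mathlib

open MeasureTheory ProbabilityTheory Matrix

noncomputable section

/-- ℓ²→ℓ² operator (spectral) norm of a real matrix. -/
def opNorm {m n : Type*} [Fintype m] [Fintype n] [DecidableEq n]
    (M : Matrix m n ℝ) : ℝ :=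
  ‖LinearMap.toContinuousLinearMap (Matrix.toEuclideanLin M)‖

/-- ℓ²→ℓ² operator (spectral) norm of a complex matrix. -/
def opNormC {m n : Type*} [Fintype m] [Fintype n] [DecidableEq n]
    (M : Matrix m n ℂ) : ℝ :=
  ‖LinearMap.toContinuousLinearMap (Matrix.toEuclideanLin M)‖

/-- Euclidean norm of a finitely indexed real vector. -/
def vnorm {n : Type*} [Fintype n] (x : n → ℝ) : ℝ :=
  Real.sqrt (∑ i, (x i) ^ 2)

/-- `‖M‖_{2,∞}`: the maximum Euclidean norm of the rows of `M`. -/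
def twoInf {m n : Type*} [Fintype m] [Fintype n] (M : Matrix m n ℝ) : ℝ :=
  ⨆ i, vnorm (M i)

/-- The diagonal matrix `diag (σ 1, …, σ m)` built from a 1-indexed sequence `σ`. -/
def sdiag {m : ℕ} (σ : ℕ → ℝ) : Matrix (Fin m) (Fin m) ℝ :=
  Matrix.of fun i j => if i = j then σ ((i : ℕ) + 1) else 0

/-- Orthogonal projection `W_{k,s} W_{k,s}ᵀ` onto the span of the (1-indexed)
columns `k,…,s` of `W`. -/
def projSlice {N m : ℕ} (W : Matrix (Fin N) (Fin m) ℝ) (k s : ℕ) :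
    Matrix (Fin N) (Fin N) ℝ :=
  Matrix.of fun a b =>
    ∑ j : Fin m, if k ≤ (j : ℕ) + 1 ∧ (j : ℕ) + 1 ≤ s then W a j * W b j else 0

/-- `‖·‖_{2,∞}` of the submatrix of `M` given by the (1-indexed) columns `k,…,s`. -/
def sliceTwoInf {N m : ℕ} (M : Matrix (Fin N) (Fin m) ℝ) (k s : ℕ) : ℝ :=
  ⨆ a, Real.sqrt (∑ j : Fin m,
    if k ≤ (j : ℕ) + 1 ∧ (j : ℕ) + 1 ≤ s then (M a j) ^ 2 else 0)

/-- `η = (11 b²/(b−1)²) √(2 (log 9) r + (K+7) log(N+n))`. -/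
def eta (N n r : ℕ) (K b : ℝ) : ℝ :=
  11 * b ^ 2 / (b - 1) ^ 2 *
    Real.sqrt (2 * Real.log 9 * r + (K + 7) * Real.log ((N : ℝ) + n))

/-- `χ(b) = 1 + 1/(4b(b−1))`. -/
def chi (b : ℝ) : ℝ := 1 + 1 / (4 * b * (b - 1))

/-- `ξ(b) = 1 + 1/(2(b−1)²)`. -/
def xib (b : ℝ) : ℝ := 1 + 1 / (2 * (b - 1) ^ 2)

/-- `γ = (9 b²/(b−1)²) √(r (K+7) log(N+n))`. -/
def gam (N n r : ℕ) (K b : ℝ) : ℝ :=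
  9 * b ^ 2 / (b - 1) ^ 2 *
    Real.sqrt ((r : ℝ) * (K + 7) * Real.log ((N : ℝ) + n))

/-- `min {δ_{k-1}, δ_s}` where `δ_j = σ_j − σ_{j+1}` (1-indexed) and `δ_0 = ∞`
(so for `k = 1` the minimum is just `δ_s`). -/
def dmin (σ : ℕ → ℝ) (k s : ℕ) : ℝ :=
  if k = 1 then σ s - σ (s + 1) else min (σ (k - 1) - σ k) (σ s - σ (s + 1))

/-- The symmetric dilation `ℰ = [[0, E], [Eᵀ, 0]]` of a rectangular matrix `E`. -/
def dil {N n : ℕ} (E : Matrix (Fin N) (Fin n) ℝ) :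
    Matrix (Fin N ⊕ Fin n) (Fin N ⊕ Fin n) ℝ :=
  Matrix.fromBlocks 0 E Eᵀ 0

/-- Complex resolvent `G(z) = (z I − ℰ)⁻¹` of the dilation. -/
def resolvC {N n : ℕ} (z : ℂ) (E : Matrix (Fin N) (Fin n) ℝ) :
    Matrix (Fin N ⊕ Fin n) (Fin N ⊕ Fin n) ℂ :=
  (z • (1 : Matrix (Fin N ⊕ Fin n) (Fin N ⊕ Fin n) ℂ) -
      (dil E).map (Complex.ofReal))⁻¹

/-- `φ₁(z) = z − ∑_{t=N+1}^{N+n} G(z)_{tt}` (complex version). -/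
def phi1C {N n : ℕ} (z : ℂ) (E : Matrix (Fin N) (Fin n) ℝ) : ℂ :=
  z - ∑ t : Fin n, resolvC z E (Sum.inr t) (Sum.inr t)

/-- `φ₂(z) = z − ∑_{t=1}^{N} G(z)_{tt}` (complex version). -/
def phi2C {N n : ℕ} (z : ℂ) (E : Matrix (Fin N) (Fin n) ℝ) : ℂ :=
  z - ∑ t : Fin N, resolvC z E (Sum.inl t) (Sum.inl t)

/-- Real resolvent `G(z) = (z I − ℰ)⁻¹` of the dilation, for real `z`. -/
def resolvR {N n : ℕ} (z : ℝ) (E : Matrix (Fin N) (Fin n) ℝ) :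
    Matrix (Fin N ⊕ Fin n) (Fin N ⊕ Fin n) ℝ :=
  (z • (1 : Matrix (Fin N ⊕ Fin n) (Fin N ⊕ Fin n) ℝ) - dil E)⁻¹

/-- `φ₁(z)` for real `z` (equals the complex version at a real point). -/
def phi1R {N n : ℕ} (z : ℝ) (E : Matrix (Fin N) (Fin n) ℝ) : ℝ :=
  z - ∑ t : Fin n, resolvR z E (Sum.inr t) (Sum.inr t)

/-- `φ₂(z)` for real `z` (equals the complex version at a real point). -/
def phi2R {N n : ℕ} (z : ℝ) (E : Matrix (Fin N) (Fin n) ℝ) : ℝ :=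
  z - ∑ t : Fin N, resolvR z E (Sum.inl t) (Sum.inl t)

/-- `Φ(z)`: diagonal matrix whose first `N` diagonal entries are `1/φ₁(z)` and whose
last `n` diagonal entries are `1/φ₂(z)`. -/
def PhiC {N n : ℕ} (z : ℂ) (E : Matrix (Fin N) (Fin n) ℝ) :
    Matrix (Fin N ⊕ Fin n) (Fin N ⊕ Fin n) ℂ :=
  Matrix.of fun p q =>
    if p = q then Sum.elim (fun _ => (phi1C z E)⁻¹) (fun _ => (phi2C z E)⁻¹) p else 0

/-- The `(N+n) × 2r` matrix `𝒰` of eigenvectors of the dilation of `A = U D Vᵀ`. -/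
def calU {N n r : ℕ} (U : Matrix (Fin N) (Fin r) ℝ) (V : Matrix (Fin n) (Fin r) ℝ) :
    Matrix (Fin N ⊕ Fin n) (Fin r ⊕ Fin r) ℝ :=
  Matrix.fromBlocks ((Real.sqrt 2)⁻¹ • U) ((Real.sqrt 2)⁻¹ • U)
    ((Real.sqrt 2)⁻¹ • V) (-((Real.sqrt 2)⁻¹ • V))

/-- Schatten `p`-norm: `(∑ᵢ sᵢ(M)ᵖ)^{1/p}`, where the singular values `sᵢ(M)` are the
square roots of the eigenvalues of `Mᴴ M`. -/
def schatten (p : ℝ) {m r : ℕ} (M : Matrix (Fin m) (Fin r) ℝ) : ℝ :=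
  (∑ i, Real.sqrt ((show (Mᵀ * M).IsHermitian by
    rw [← Matrix.conjTranspose_eq_transpose_of_trivial]; exact Matrix.isHermitian_conjTranspose_mul_self M).eigenvalues i) ^ p) ^ (1 / p)

open scoped Matrix.Norms.L2Operator

namespace Stmt15Aux

lemma comp_le {p : Type*} [Fintype p] (y : EuclideanSpace ℂ p) (i : p) : ‖y i‖ ≤ ‖y‖ := by
  rw [EuclideanSpace.norm_eq]
  refine Real.le_sqrt_of_sq_le ?_
  exact Finset.single_le_sum (f := fun j => ‖y j‖ ^ 2) (fun j _ => sq_nonneg _) (Finset.mem_univ i)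

lemma entry_le_norm {p : Type*} [Fintype p] [DecidableEq p] (M : Matrix p p ℂ) (i j : p) :
    ‖M i j‖ ≤ ‖M‖ := by
  have h := M.l2_opNorm_mulVec (EuclideanSpace.single j 1)
  rw [EuclideanSpace.norm_single, norm_one, mul_one] at h
  refine le_trans ?_ h
  have h2 := comp_le ((EuclideanSpace.equiv p ℂ).symm <| M *ᵥ (EuclideanSpace.single j 1)) i
  refine le_trans (le_of_eq ?_) h2
  have : ((EuclideanSpace.equiv p ℂ).symm <| M *ᵥ (EuclideanSpace.single j 1)) i
      = (M *ᵥ (Pi.single j 1)) i := rfl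
  rw [this, Matrix.mulVec_single]
  simp

end Stmt15Aux

namespace Stmt15Aux

lemma map_ofReal_le {m p : Type*} [Fintype m] [Fintype p] [DecidableEq p] (M : Matrix m p ℝ) :
    ‖M.map (Complex.ofReal)‖ ≤ ‖LinearMap.toContinuousLinearMap (Matrix.toEuclideanLin M)‖ := by
  rw [Matrix.l2_opNorm_def]
  set C := ‖LinearMap.toContinuousLinearMap (Matrix.toEuclideanLin M)‖ with hC
  rw [LinearEquiv.trans_apply]
  refine ContinuousLinearMap.opNorm_le_bound _ (norm_nonneg _) fun x => ?_
  set u : EuclideanSpace ℝ p := WithLp.toLp 2 (fun i => (x i).re) with hu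
  set v : EuclideanSpace ℝ p := WithLp.toLp 2 (fun i => (x i).im) with hv
  have hx2 : ‖x‖ ^ 2 = ‖u‖ ^ 2 + ‖v‖ ^ 2 := by
    simp only [EuclideanSpace.norm_eq]
    rw [Real.sq_sqrt (by positivity), Real.sq_sqrt (by positivity),
      Real.sq_sqrt (by positivity), ← Finset.sum_add_distrib]
    refine Finset.sum_congr rfl fun i _ => ?_
    simp [hu, hv, Complex.sq_norm, Complex.normSq_apply,
      Real.norm_eq_abs, sq_abs]
    ring
  have hTx : ∀ j, (LinearMap.toContinuousLinearMap
      (Matrix.toEuclideanLin (M.map Complex.ofReal)) x) j = ((M.map Complex.ofReal) *ᵥ x) j :=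
    fun _ => rfl
  have hMu : ‖(EuclideanSpace.equiv m ℝ).symm (M *ᵥ (fun i => (x i).re))‖ ≤ C * ‖u‖ := by
    have := (LinearMap.toContinuousLinearMap (Matrix.toEuclideanLin M)).le_opNorm u
    exact this
  have hMv : ‖(EuclideanSpace.equiv m ℝ).symm (M *ᵥ (fun i => (x i).im))‖ ≤ C * ‖v‖ := by
    have := (LinearMap.toContinuousLinearMap (Matrix.toEuclideanLin M)).le_opNorm v
    exact this
  have hcomp : ∀ j, ‖((M.map Complex.ofReal) *ᵥ x) j‖ ^ 2
      = ((M *ᵥ (fun i => (x i).re)) j) ^ 2 + ((M *ᵥ (fun i => (x i).im)) j) ^ 2 := by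
    intro j
    rw [Complex.sq_norm, Complex.normSq_apply]
    simp only [Matrix.mulVec, dotProduct, Matrix.map_apply, Complex.re_sum, Complex.im_sum,
      Complex.mul_re, Complex.mul_im, Complex.ofReal_re, Complex.ofReal_im,
      zero_mul, mul_zero, sub_zero, add_zero, zero_add]
    ring
  have hTx2 : ‖LinearMap.toContinuousLinearMap (Matrix.toEuclideanLin (M.map Complex.ofReal)) x‖ ^ 2
      = ‖(EuclideanSpace.equiv m ℝ).symm (M *ᵥ (fun i => (x i).re))‖ ^ 2
        + ‖(EuclideanSpace.equiv m ℝ).symm (M *ᵥ (fun i => (x i).im))‖ ^ 2 := by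
    simp only [EuclideanSpace.norm_eq]
    rw [Real.sq_sqrt (by positivity), Real.sq_sqrt (by positivity),
      Real.sq_sqrt (by positivity), ← Finset.sum_add_distrib]
    refine Finset.sum_congr rfl fun j _ => ?_
    rw [hTx j, hcomp j]
    norm_num [Real.norm_eq_abs, sq_abs]
  have hCu : 0 ≤ C := norm_nonneg _
  have ha0 : (0:ℝ) ≤ ‖(EuclideanSpace.equiv m ℝ).symm (M *ᵥ (fun i => (x i).re))‖ :=
    norm_nonneg _
  have hc0 : (0:ℝ) ≤ ‖(EuclideanSpace.equiv m ℝ).symm (M *ᵥ (fun i => (x i).im))‖ :=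
    norm_nonneg _
  have hsq : ‖LinearMap.toContinuousLinearMap (Matrix.toEuclideanLin (M.map Complex.ofReal)) x‖ ^ 2
      ≤ (C * ‖x‖) ^ 2 := by
    have hx2' : (C * ‖x‖) ^ 2 = (C * ‖u‖) ^ 2 + (C * ‖v‖) ^ 2 := by
      rw [mul_pow, mul_pow, mul_pow, hx2]; ring
    nlinarith [mul_le_mul hMu hMu ha0 (mul_nonneg hCu (norm_nonneg u)),
      mul_le_mul hMv hMv hc0 (mul_nonneg hCu (norm_nonneg v))]
  exact (abs_le_of_sq_le_sq' hsq (mul_nonneg hCu (norm_nonneg x))).2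

end Stmt15Aux

namespace Stmt15Aux

lemma map_transpose_norm {m p : Type*} [Fintype m] [Fintype p] [DecidableEq m] [DecidableEq p]
    (M : Matrix m p ℝ) : ‖(Mᵀ.map Complex.ofReal)‖ = ‖M.map Complex.ofReal‖ := by
  have h : Mᵀ.map Complex.ofReal = (M.map Complex.ofReal)ᴴ := by
    ext i j
    simp [Matrix.conjTranspose_apply, Complex.conj_ofReal]
  rw [h, Matrix.l2_opNorm_conjTranspose]

lemma fromBlocks_norm_le {N n : ℕ} (B : Matrix (Fin N) (Fin n) ℂ) (C : Matrix (Fin n) (Fin N) ℂ) :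
    ‖(Matrix.fromBlocks 0 B C 0 : Matrix (Fin N ⊕ Fin n) (Fin N ⊕ Fin n) ℂ)‖
      ≤ max ‖B‖ ‖C‖ := by
  rw [Matrix.l2_opNorm_def, LinearEquiv.trans_apply]
  refine ContinuousLinearMap.opNorm_le_bound _ (le_max_of_le_left (norm_nonneg _)) fun x => ?_
  set K := max ‖B‖ ‖C‖ with hK
  set x1 : EuclideanSpace ℂ (Fin N) := WithLp.toLp 2 (fun i => x (Sum.inl i)) with hx1d
  set x2 : EuclideanSpace ℂ (Fin n) := WithLp.toLp 2 (fun i => x (Sum.inr i)) with hx2d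
  have hl : ∀ j, ((Matrix.fromBlocks 0 B C 0 : Matrix (Fin N ⊕ Fin n) (Fin N ⊕ Fin n) ℂ)
      *ᵥ x) (Sum.inl j) = (B *ᵥ x2) j := by
    intro j
    simp [Matrix.mulVec, dotProduct, Fintype.sum_sum_type, hx2d]
  have hr : ∀ j, ((Matrix.fromBlocks 0 B C 0 : Matrix (Fin N ⊕ Fin n) (Fin N ⊕ Fin n) ℂ)
      *ᵥ x) (Sum.inr j) = (C *ᵥ x1) j := by
    intro j
    simp [Matrix.mulVec, dotProduct, Fintype.sum_sum_type, hx1d]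
  have hBx : ‖(EuclideanSpace.equiv (Fin N) ℂ).symm (B *ᵥ x2)‖ ≤ ‖B‖ * ‖x2‖ :=
    B.l2_opNorm_mulVec x2
  have hCx : ‖(EuclideanSpace.equiv (Fin n) ℂ).symm (C *ᵥ x1)‖ ≤ ‖C‖ * ‖x1‖ :=
    C.l2_opNorm_mulVec x1
  set a := ‖(EuclideanSpace.equiv (Fin N) ℂ).symm (B *ᵥ x2)‖ with ha
  set c := ‖(EuclideanSpace.equiv (Fin n) ℂ).symm (C *ᵥ x1)‖ with hc
  set T := ‖LinearMap.toContinuousLinearMap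
      (Matrix.toEuclideanLin (Matrix.fromBlocks 0 B C 0 :
        Matrix (Fin N ⊕ Fin n) (Fin N ⊕ Fin n) ℂ)) x‖ with hT
  have hx2n : ‖x‖ ^ 2 = ‖x1‖ ^ 2 + ‖x2‖ ^ 2 := by
    simp only [EuclideanSpace.norm_eq]
    rw [Real.sq_sqrt (by positivity), Real.sq_sqrt (by positivity),
      Real.sq_sqrt (by positivity), Fintype.sum_sum_type]
  have hTx2 : T ^ 2 = a ^ 2 + c ^ 2 := by
    rw [hT, ha, hc]
    simp only [EuclideanSpace.norm_eq]
    rw [Real.sq_sqrt (by positivity), Real.sq_sqrt (by positivity),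
      Real.sq_sqrt (by positivity), Fintype.sum_sum_type]
    have h1 : ∀ j, ‖(LinearMap.toContinuousLinearMap
        (Matrix.toEuclideanLin (Matrix.fromBlocks 0 B C 0 :
          Matrix (Fin N ⊕ Fin n) (Fin N ⊕ Fin n) ℂ)) x) (Sum.inl j)‖ ^ 2
        = ‖(B *ᵥ x2) j‖ ^ 2 := fun j => by
      rw [show (LinearMap.toContinuousLinearMap
        (Matrix.toEuclideanLin (Matrix.fromBlocks 0 B C 0 :
          Matrix (Fin N ⊕ Fin n) (Fin N ⊕ Fin n) ℂ)) x) (Sum.inl j)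
        = ((Matrix.fromBlocks 0 B C 0 : Matrix (Fin N ⊕ Fin n) (Fin N ⊕ Fin n) ℂ)
          *ᵥ x) (Sum.inl j) from rfl, hl j]
    have h2 : ∀ j, ‖(LinearMap.toContinuousLinearMap
        (Matrix.toEuclideanLin (Matrix.fromBlocks 0 B C 0 :
          Matrix (Fin N ⊕ Fin n) (Fin N ⊕ Fin n) ℂ)) x) (Sum.inr j)‖ ^ 2
        = ‖(C *ᵥ x1) j‖ ^ 2 := fun j => by
      rw [show (LinearMap.toContinuousLinearMap
        (Matrix.toEuclideanLin (Matrix.fromBlocks 0 B C 0 :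
          Matrix (Fin N ⊕ Fin n) (Fin N ⊕ Fin n) ℂ)) x) (Sum.inr j)
        = ((Matrix.fromBlocks 0 B C 0 : Matrix (Fin N ⊕ Fin n) (Fin N ⊕ Fin n) ℂ)
          *ᵥ x) (Sum.inr j) from rfl, hr j]
    rw [Finset.sum_congr rfl fun j _ => h1 j, Finset.sum_congr rfl fun j _ => h2 j]
    rfl
  have hB0 : ‖B‖ ≤ K := le_max_left _ _
  have hC0 : ‖C‖ ≤ K := le_max_right _ _
  have hK0 : 0 ≤ K := le_trans (norm_nonneg _) hB0
  have e1 : a ≤ K * ‖x2‖ :=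
    le_trans hBx (mul_le_mul_of_nonneg_right hB0 (norm_nonneg _))
  have e2 : c ≤ K * ‖x1‖ :=
    le_trans hCx (mul_le_mul_of_nonneg_right hC0 (norm_nonneg _))
  have hsq : T ^ 2 ≤ (K * ‖x‖) ^ 2 := by
    have hx2' : (K * ‖x‖) ^ 2 = (K * ‖x1‖) ^ 2 + (K * ‖x2‖) ^ 2 := by
      rw [mul_pow, mul_pow, mul_pow, hx2n]; ring
    nlinarith [mul_le_mul e1 e1 (norm_nonneg _) (mul_nonneg hK0 (norm_nonneg x2)),
      mul_le_mul e2 e2 (norm_nonneg _) (mul_nonneg hK0 (norm_nonneg x1))]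
  exact (abs_le_of_sq_le_sq' hsq (mul_nonneg hK0 (norm_nonneg x))).2

lemma norm_one_matrix (N n : ℕ) (hN : 0 < N) :
    ‖(1 : Matrix (Fin N ⊕ Fin n) (Fin N ⊕ Fin n) ℂ)‖ = 1 := by
  haveI : Nonempty (Fin N ⊕ Fin n) := ⟨Sum.inl ⟨0, hN⟩⟩
  rw [Matrix.cstar_norm_def, _root_.map_one]
  exact norm_one

end Stmt15Aux

namespace Stmt15Aux

section Main
variable {N n : ℕ}

set_option maxHeartbeats 1000000 in
theorem main_bounds
    (N n : ℕ) (hN : 0 < N) (hn : 0 < n)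
    (E : Matrix (Fin N) (Fin n) ℝ)
    (hE : ‖LinearMap.toContinuousLinearMap (Matrix.toEuclideanLin E)‖
        ≤ 2 * (Real.sqrt N + Real.sqrt n))
    (b : ℝ) (hb : 2 ≤ b) (z : ℂ)
    (hz : 2 * b * (Real.sqrt N + Real.sqrt n) ≤ ‖z‖) :
    IsUnit (z • (1 : Matrix (Fin N ⊕ Fin n) (Fin N ⊕ Fin n) ℂ) -
        (dil E).map Complex.ofReal) ∧
    ‖resolvC z E‖ ≤ b / (b - 1) * (1 / ‖z‖) ∧
    (1 - 1 / (4 * b * (b - 1))) * ‖z‖ ≤ ‖phi1C z E‖ ∧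
    ‖phi1C z E‖ ≤ (1 + 1 / (4 * b * (b - 1))) * ‖z‖ ∧
    (1 - 1 / (4 * b * (b - 1))) * ‖z‖ ≤ ‖phi2C z E‖ ∧
    ‖phi2C z E‖ ≤ (1 + 1 / (4 * b * (b - 1))) * ‖z‖ := by
  classical
  haveI : CompleteSpace (Matrix (Fin N ⊕ Fin n) (Fin N ⊕ Fin n) ℂ) :=
    FiniteDimensional.complete ℂ _
  set s := Real.sqrt N + Real.sqrt n with hsdef
  have hsN : Real.sqrt N ≥ 1 := by
    rw [show (1:ℝ) = Real.sqrt 1 by simp]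
    exact Real.sqrt_le_sqrt (by exact_mod_cast hN)
  have hsn : Real.sqrt n ≥ 1 := by
    rw [show (1:ℝ) = Real.sqrt 1 by simp]
    exact Real.sqrt_le_sqrt (by exact_mod_cast hn)
  have hs0 : 0 < s := by rw [hsdef]; linarith
  have hb1 : (1:ℝ) < b := by linarith
  have hb0 : (0:ℝ) < b := by linarith
  set r := ‖z‖ with hrdef
  have hr0 : (0:ℝ) < r := lt_of_lt_of_le (by positivity) hz
  have hz0 : z ≠ 0 := by
    intro h
    rw [h] at hrdef
    simp at hrdef
    rw [hrdef] at hr0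
    exact lt_irrefl _ hr0
  set Ec := (dil E).map Complex.ofReal with hEcdef
  have hEc : ‖Ec‖ ≤ 2 * s := by
    have hmap : Ec = Matrix.fromBlocks 0 (E.map Complex.ofReal) (Eᵀ.map Complex.ofReal) 0 := by
      rw [hEcdef]
      unfold dil
      ext (i | i) (j | j) <;> simp [Matrix.fromBlocks, Matrix.map_apply]
    rw [hmap]
    refine le_trans (fromBlocks_norm_le _ _) ?_
    rw [map_transpose_norm, max_self]
    exact le_trans (map_ofReal_le E) hE
  -- the contraction t
  set t : Matrix (Fin N ⊕ Fin n) (Fin N ⊕ Fin n) ℂ := z⁻¹ • Ec with htdef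
  have htn : ‖t‖ ≤ 1 / b := by
    rw [htdef, norm_smul, norm_inv, ← hrdef]
    rw [div_eq_mul_inv, one_mul]
    have h2bs : 2 * b * s ≤ r := hz
    have h1 : ‖Ec‖ ≤ r / b := by
      refine le_trans hEc ?_
      rw [le_div_iff₀ hb0]
      nlinarith
    calc r⁻¹ * ‖Ec‖ ≤ r⁻¹ * (r / b) := by
          exact mul_le_mul_of_nonneg_left h1 (by positivity)
      _ = b⁻¹ := by field_simp
  have ht1 : ‖t‖ < 1 := lt_of_le_of_lt htn (by rw [div_lt_one hb0]; linarith)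
  set S := ∑' i : ℕ, t ^ i with hSdef
  have hS1 : S * (1 - t) = 1 := geom_series_mul_neg t ht1
  have h1S : (1 - t) * S = 1 := mul_neg_geom_series t ht1
  have hSn : ‖S‖ ≤ (1 - ‖t‖)⁻¹ := by
    have h := tsum_geometric_le_of_norm_lt_one t ht1
    rwa [norm_one_matrix N n hN, sub_self, zero_add] at h
  set A := z • (1 : Matrix (Fin N ⊕ Fin n) (Fin N ⊕ Fin n) ℂ) - Ec with hAdef
  have hA : A = z • ((1 : Matrix (Fin N ⊕ Fin n) (Fin N ⊕ Fin n) ℂ) - t) := by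
    rw [hAdef, smul_sub, htdef, smul_smul, mul_inv_cancel₀ hz0, one_smul]
  set Bm := z⁻¹ • S with hBmdef
  have hAB : A * Bm = 1 := by
    rw [hA, hBmdef, smul_mul_assoc, mul_smul_comm, smul_smul, mul_inv_cancel₀ hz0, one_smul, h1S]
  have hBA : Bm * A = 1 := by
    rw [hA, hBmdef, smul_mul_assoc, mul_smul_comm, smul_smul, inv_mul_cancel₀ hz0, one_smul, hS1]
  have hUnit : IsUnit A := ⟨⟨A, Bm, hAB, hBA⟩, rfl⟩
  have hres : resolvC z E = Bm := by
    have : resolvC z E = A⁻¹ := rfl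
    rw [this]
    exact Matrix.inv_eq_right_inv hAB
  have hBmn : ‖Bm‖ ≤ b / (b - 1) * (1 / r) := by
    rw [hBmdef, norm_smul, norm_inv, ← hrdef]
    have h1t : (b - 1) / b ≤ 1 - ‖t‖ := by
      have e : (b - 1) / b = 1 - 1 / b := by field_simp
      rw [e]
      linarith [htn]
    have h1t0 : (0:ℝ) < (b - 1) / b := div_pos (by linarith) hb0
    have hSn2 : ‖S‖ ≤ b / (b - 1) := by
      refine le_trans hSn (le_trans (inv_anti₀ h1t0 h1t) ?_)
      rw [inv_div]
    calc r⁻¹ * ‖S‖ ≤ r⁻¹ * (b / (b - 1)) :=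
          mul_le_mul_of_nonneg_left hSn2 (by positivity)
      _ = b / (b - 1) * (1 / r) := by rw [one_div]; ring
  -- diagonal identity
  have h1 : z • Bm = 1 + Bm * Ec := by
    have hBA' : Bm * (z • (1 : Matrix (Fin N ⊕ Fin n) (Fin N ⊕ Fin n) ℂ) - Ec) = 1 := hBA
    rw [mul_sub, mul_smul_comm, mul_one] at hBA'
    rw [← hBA']
    abel
  have h2 : z • (Bm * Ec) = Ec + Bm * Ec * Ec := by
    calc z • (Bm * Ec) = (z • Bm) * Ec := (smul_mul_assoc z Bm Ec).symm
      _ = (1 + Bm * Ec) * Ec := by rw [h1]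
      _ = Ec + Bm * Ec * Ec := by rw [add_mul, one_mul]
  have hEcdiag : ∀ p, Ec p p = 0 := by
    rintro (i | i) <;> simp [hEcdef, dil, Matrix.map_apply]
  have hdiag : ∀ p, (z * z) * Bm p p = z + (Bm * Ec * Ec) p p := by
    intro p
    have e1 : z * Bm p p = 1 + (Bm * Ec) p p := by
      have := congrFun (congrFun h1 p) p
      simpa [Matrix.smul_apply, Matrix.add_apply, Matrix.one_apply_eq, smul_eq_mul] using this
    have e2 : z * (Bm * Ec) p p = Ec p p + (Bm * Ec * Ec) p p := by
      have := congrFun (congrFun h2 p) p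
      simpa [Matrix.smul_apply, Matrix.add_apply, smul_eq_mul] using this
    have e3 : Ec p p = 0 := hEcdiag p
    linear_combination z * e1 + e2 + e3
  -- general sum bound
  have hKn : ‖Bm * Ec * Ec‖ ≤ (b / (b - 1) * (1 / r)) * ((2 * s) * (2 * s)) := by
    refine le_trans (Matrix.l2_opNorm_mul _ _) ?_
    have h1' : ‖Bm * Ec‖ ≤ (b / (b - 1) * (1 / r)) * (2 * s) := by
      refine le_trans (Matrix.l2_opNorm_mul _ _) ?_
      have hnn : (0:ℝ) ≤ b / (b - 1) * (1 / r) :=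
        mul_nonneg (div_nonneg (by linarith) (by linarith)) (by positivity)
      have := mul_le_mul hBmn hEc (norm_nonneg _) hnn
      linarith
    have hnn2 : (0:ℝ) ≤ b / (b - 1) * (1 / r) * (2 * s) :=
      mul_nonneg (mul_nonneg (div_nonneg (by linarith) (by linarith)) (by positivity))
        (by positivity)
    have := mul_le_mul h1' hEc (norm_nonneg _) hnn2
    nlinarith [norm_nonneg (Bm * Ec), norm_nonneg Ec, hEc]
  have main : ∀ (F : Finset (Fin N ⊕ Fin n)), (F.card : ℝ) ≤ s ^ 2 →
      ‖∑ p ∈ F, Bm p p‖ ≤ 1 / (4 * b * (b - 1)) * r := by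
    intro F hF
    have hsum : (z * z) * (∑ p ∈ F, Bm p p) = F.card * z + ∑ p ∈ F, (Bm * Ec * Ec) p p := by
      rw [Finset.mul_sum, Finset.sum_congr rfl fun p _ => hdiag p, Finset.sum_add_distrib,
        Finset.sum_const, nsmul_eq_mul]
    have hDn : ‖∑ p ∈ F, (Bm * Ec * Ec) p p‖
        ≤ F.card * ((b / (b - 1) * (1 / r)) * ((2 * s) * (2 * s))) := by
      refine le_trans (norm_sum_le _ _) ?_
      have hterm : ∀ p ∈ F, ‖(Bm * Ec * Ec) p p‖
          ≤ (b / (b - 1) * (1 / r)) * ((2 * s) * (2 * s)) :=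
        fun p _ => le_trans (entry_le_norm _ p p) hKn
      refine le_trans (Finset.sum_le_sum hterm) ?_
      rw [Finset.sum_const, nsmul_eq_mul]
    -- numeric bound
    have habs : r ^ 2 * ‖∑ p ∈ F, Bm p p‖
        ≤ (F.card : ℝ) * r + F.card * ((b / (b - 1) * (1 / r)) * ((2 * s) * (2 * s))) := by
      have e : r ^ 2 * ‖∑ p ∈ F, Bm p p‖
          = ‖(z * z) * ∑ p ∈ F, Bm p p‖ := by
        rw [norm_mul, norm_mul, ← hrdef]
        ring
      rw [e, hsum]
      refine le_trans (norm_add_le _ _) ?_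
      rw [norm_mul]
      simp only [Complex.norm_natCast, ← hrdef]
      exact add_le_add_right hDn _
    have hsle : s ≤ r / (2 * b) := by rw [le_div_iff₀ (by positivity)]; linarith
    have hP : (F.card : ℝ) * r + F.card * ((b / (b - 1) * (1 / r)) * ((2 * s) * (2 * s)))
        ≤ r ^ 2 * (1 / (4 * b * (b - 1)) * r) := by
      set q := r / (2 * b) with hq
      have hq0 : 0 < q := by positivity
      have hsq : s ≤ q := hsle
      have hFq : (F.card : ℝ) ≤ q ^ 2 :=
        le_trans hF (by nlinarith)
      have t1 : (F.card : ℝ) * r ≤ q ^ 2 * r :=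
        mul_le_mul_of_nonneg_right hFq (le_of_lt hr0)
      have t2 : (F.card : ℝ) * ((b / (b - 1) * (1 / r)) * ((2 * s) * (2 * s)))
          ≤ q ^ 2 * ((b / (b - 1) * (1 / r)) * ((2 * q) * (2 * q))) := by
        have hbb : 0 ≤ b / (b - 1) * (1 / r) :=
          mul_nonneg (div_nonneg (by linarith) (by linarith)) (by positivity)
        have h2s : (2 * s) * (2 * s) ≤ (2 * q) * (2 * q) := by nlinarith
        have : (b / (b - 1) * (1 / r)) * ((2 * s) * (2 * s))
            ≤ (b / (b - 1) * (1 / r)) * ((2 * q) * (2 * q)) :=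
          mul_le_mul_of_nonneg_left h2s hbb
        refine mul_le_mul hFq this
          (mul_nonneg hbb (by positivity)) (by positivity)
      have hfinal : q ^ 2 * r + q ^ 2 * ((b / (b - 1) * (1 / r)) * ((2 * q) * (2 * q)))
          ≤ r ^ 2 * (1 / (4 * b * (b - 1)) * r) := by
        rw [hq]
        have hb1' : (0:ℝ) < b - 1 := by linarith
        have e1 : (r/(2*b))^2*r + (r/(2*b))^2*(b/(b-1)*(1/r)*(2*(r/(2*b))*(2*(r/(2*b)))))
            = r^3/(4*b^2) + r^3/(4*b^3*(b-1)) := by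
          field_simp
          ring
        have e2 : r^2*(1/(4*b*(b-1))*r) = r^3/(4*b*(b-1)) := by ring
        rw [e1, e2, div_add_div _ _ (by positivity) (by positivity),
          div_le_div_iff₀ (by positivity) (by positivity)]
        nlinarith [mul_nonneg (mul_nonneg (pow_pos hr0 3).le (pow_pos hb0 3).le)
          (sq_nonneg (b-1))]
      linarith
    have h3 : r ^ 2 * ‖∑ p ∈ F, Bm p p‖
        ≤ r ^ 2 * (1 / (4 * b * (b - 1)) * r) := le_trans habs hP
    exact le_of_mul_le_mul_left h3 (by positivity)
  have hb4 : (0:ℝ) < 4 * b * (b - 1) := by nlinarith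
  have hNcard : ((N:ℝ)) ≤ s ^ 2 := by
    have h1 : Real.sqrt N ≤ s := by rw [hsdef]; linarith
    have h2 : Real.sqrt N ^ 2 = (N:ℝ) := Real.sq_sqrt (Nat.cast_nonneg N)
    nlinarith [Real.sqrt_nonneg (N:ℝ)]
  have hncard : ((n:ℝ)) ≤ s ^ 2 := by
    have h1 : Real.sqrt n ≤ s := by rw [hsdef]; linarith
    have h2 : Real.sqrt n ^ 2 = (n:ℝ) := Real.sq_sqrt (Nat.cast_nonneg n)
    nlinarith [Real.sqrt_nonneg (n:ℝ)]
  have hphi1 : phi1C z E = z - ∑ p : Fin n, Bm (Sum.inr p) (Sum.inr p) := by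
    unfold phi1C
    rw [hres]
  have hphi2 : phi2C z E = z - ∑ p : Fin N, Bm (Sum.inl p) (Sum.inl p) := by
    unfold phi2C
    rw [hres]
  have hS1b : ‖∑ p : Fin n, Bm (Sum.inr p) (Sum.inr p)‖
      ≤ 1 / (4 * b * (b - 1)) * r := by
    have hmap : ∑ p : Fin n, Bm (Sum.inr p) (Sum.inr p)
        = ∑ p ∈ (Finset.univ.map ⟨Sum.inr, Sum.inr_injective⟩ : Finset (Fin N ⊕ Fin n)),
            Bm p p := by
      rw [Finset.sum_map]
      rfl
    rw [hmap]
    refine main _ ?_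
    rw [Finset.card_map, Finset.card_univ, Fintype.card_fin]
    exact hncard
  have hS2b : ‖∑ p : Fin N, Bm (Sum.inl p) (Sum.inl p)‖
      ≤ 1 / (4 * b * (b - 1)) * r := by
    have hmap : ∑ p : Fin N, Bm (Sum.inl p) (Sum.inl p)
        = ∑ p ∈ (Finset.univ.map ⟨Sum.inl, Sum.inl_injective⟩ : Finset (Fin N ⊕ Fin n)),
            Bm p p := by
      rw [Finset.sum_map]
      rfl
    rw [hmap]
    refine main _ ?_
    rw [Finset.card_map, Finset.card_univ, Fintype.card_fin]
    exact hNcard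
  refine ⟨hUnit, by rw [hres]; exact hBmn, ?_, ?_, ?_, ?_⟩
  · rw [hphi1]
    have hlow := norm_sub_norm_le z (∑ p : Fin n, Bm (Sum.inr p) (Sum.inr p))
    rw [← hrdef] at hlow
    have he : (1 - 1 / (4 * b * (b - 1))) * r = r - 1 / (4 * b * (b - 1)) * r := by ring
    rw [he]
    linarith [hS1b, hlow]
  · rw [hphi1]
    have hup := norm_sub_le z (∑ p : Fin n, Bm (Sum.inr p) (Sum.inr p))
    rw [← hrdef] at hup
    have he : (1 + 1 / (4 * b * (b - 1))) * r = r + 1 / (4 * b * (b - 1)) * r := by ring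
    rw [he]
    linarith [hS1b, hup]
  · rw [hphi2]
    have hlow := norm_sub_norm_le z (∑ p : Fin N, Bm (Sum.inl p) (Sum.inl p))
    rw [← hrdef] at hlow
    have he : (1 - 1 / (4 * b * (b - 1))) * r = r - 1 / (4 * b * (b - 1)) * r := by ring
    rw [he]
    linarith [hS2b, hlow]
  · rw [hphi2]
    have hup := norm_sub_le z (∑ p : Fin N, Bm (Sum.inl p) (Sum.inl p))
    rw [← hrdef] at hup
    have he : (1 + 1 / (4 * b * (b - 1))) * r = r + 1 / (4 * b * (b - 1)) * r := by ring
    rw [he]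
    linarith [hS2b, hup]
end Main
end Stmt15Aux


/-- Lemma 21 of the paper: resolvent norm bounds. -/
theorem stmt15_resolvent_bounds
    (N n : ℕ) (hN : 0 < N) (hn : 0 < n)
    (E : Matrix (Fin N) (Fin n) ℝ)
    (hE : opNorm E ≤ 2 * (Real.sqrt N + Real.sqrt n))
    (b : ℝ) (hb : 2 ≤ b) (z : ℂ)
    (hz : 2 * b * (Real.sqrt N + Real.sqrt n) ≤ ‖z‖) :
    IsUnit (z • (1 : Matrix (Fin N ⊕ Fin n) (Fin N ⊕ Fin n) ℂ) -
        (dil E).map Complex.ofReal) ∧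
    opNormC (resolvC z E) ≤ b / (b - 1) * (1 / ‖z‖) ∧
    (1 - 1 / (4 * b * (b - 1))) * ‖z‖ ≤ ‖phi1C z E‖ ∧
    ‖phi1C z E‖ ≤ (1 + 1 / (4 * b * (b - 1))) * ‖z‖ ∧
    (1 - 1 / (4 * b * (b - 1))) * ‖z‖ ≤ ‖phi2C z E‖ ∧
    ‖phi2C z E‖ ≤ (1 + 1 / (4 * b * (b - 1))) * ‖z‖ := by
  exact Stmt15Aux.main_bounds N n hN hn E hE b hb z hz
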